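/- Let 1/2 < μ ≤ 1. Then no point of the set ⋃_{n≥1} ⋃_{i=1}^{2^{n−1}} ( (2i−1)/2ⁿ − (1 − h_μ(μ))/2ⁿ , (2i−1)/2ⁿ + (1 − h_μ(μ))/2ⁿ ) belongs to the range of h_μ; that is, for every n ≥ 1, every i with 1 ≤ i ≤ 2^{n−1}, and every x ∈ [0,1], the value h_μ(x) does not lie in the open interval centered at (2i−1)/2ⁿ of radius (1 − h_μ(μ))/2ⁿ. -/

import Mathlib

open Set

/-- `h : [0,1] → [0,1]` satisfies the commuter functional equation for `T_μ`:
`h(x) = (1/2)·h(2μx)` for `0 ≤ x ≤ 1/2` and `h(x) = 1 - (1/2)·h(2μ(1-x))` for `1/2 < x ≤ 1`. -/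
def IsCommuter (μ : ℝ) (h : ℝ → ℝ) : Prop :=
  (∀ x ∈ Icc (0:ℝ) 1, h x ∈ Icc (0:ℝ) 1) ∧
  (∀ x : ℝ, 0 ≤ x → x ≤ 1/2 → h x = (1/2) * h (2*μ*x)) ∧
  (∀ x : ℝ, 1/2 < x → x ≤ 1 → h x = 1 - (1/2) * h (2*μ*(1-x)))

lemma key_lemma {μ : ℝ} {h : ℝ → ℝ} (hμ1 : 1/2 < μ) (hμ2 : μ ≤ 1) (hc : IsCommuter μ h) :
    ∀ k : ℕ, ∀ c : ℝ, 0 ≤ c → c ≤ μ →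
      (∀ y : ℝ, 0 ≤ y → y ≤ c → h y ≤ h c + (1/2:ℝ)^k) ∧
      (∀ w : ℝ, c ≤ w → w ≤ μ → h c - (1/2:ℝ)^k ≤ h w) := by
  obtain ⟨hmem, hL, hR⟩ := hc
  have hμ0 : 0 < μ := by linarith
  intro k
  induction k with
  | zero =>
      intro c hc0 hcμ
      have h1 := hmem c ⟨hc0, hcμ.trans hμ2⟩
      refine ⟨fun y hy0 hyc => ?_, fun w hcw hwμ => ?_⟩
      · have h2 := hmem y ⟨hy0, (hyc.trans hcμ).trans hμ2⟩
        simp only [pow_zero]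
        linarith [h1.1, h2.2]
      · have h2 := hmem w ⟨hc0.trans hcw, hwμ.trans hμ2⟩
        simp only [pow_zero]
        linarith [h1.2, h2.1]
  | succ k ih =>
      intro c hc0 hcμ
      have hcμ2 : c ≤ 1 := hcμ.trans hμ2
      constructor
      · intro y hy0 hyc
        by_cases hhalf : c ≤ 1/2
        · have hy2 : y ≤ 1/2 := hyc.trans hhalf
          rw [hL y hy0 hy2, hL c hc0 hhalf]
          have h1 : 0 ≤ 2*μ*y := by positivity
          have h2 : 2*μ*y ≤ 2*μ*c := by nlinarith
          have h3 : 0 ≤ 2*μ*c := by positivity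
          have h4 : 2*μ*c ≤ μ := by nlinarith
          have := (ih (2*μ*c) h3 h4).1 (2*μ*y) h1 h2
          rw [pow_succ]; linarith
        · push_neg at hhalf
          by_cases hy2 : y ≤ 1/2
          · have h1 : 0 ≤ 2*μ*y := by positivity
            have h2 : 2*μ*y ≤ 1 := by nlinarith
            have h5 := hmem (2*μ*y) ⟨h1, h2⟩
            have h6 : 0 ≤ 2*μ*(1-c) := by nlinarith
            have h7 : 2*μ*(1-c) ≤ 1 := by nlinarith
            have h8 := hmem (2*μ*(1-c)) ⟨h6, h7⟩
            rw [hL y hy0 hy2, hR c hhalf hcμ2]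
            have hpos : (0:ℝ) < (1/2:ℝ)^(k+1) := by positivity
            linarith [h5.2, h8.2]
          · push_neg at hy2
            rw [hR y hy2 (hyc.trans hcμ2), hR c hhalf hcμ2]
            have h6 : 0 ≤ 2*μ*(1-c) := by nlinarith
            have h4 : 2*μ*(1-c) ≤ μ := by nlinarith
            have h2 : 2*μ*(1-c) ≤ 2*μ*(1-y) := by nlinarith
            have h7 : 2*μ*(1-y) ≤ μ := by nlinarith
            have := (ih (2*μ*(1-c)) h6 h4).2 (2*μ*(1-y)) h2 h7
            rw [pow_succ]; linarith
      · intro w hcw hwμ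
        have hwμ2 : w ≤ 1 := hwμ.trans hμ2
        by_cases hhalf : c ≤ 1/2
        · by_cases hw2 : w ≤ 1/2
          · rw [hL w (hc0.trans hcw) hw2, hL c hc0 hhalf]
            have h3 : 0 ≤ 2*μ*c := by positivity
            have h4 : 2*μ*c ≤ μ := by nlinarith
            have h2 : 2*μ*c ≤ 2*μ*w := by nlinarith
            have h7 : 2*μ*w ≤ μ := by nlinarith
            have := (ih (2*μ*c) h3 h4).2 (2*μ*w) h2 h7
            rw [pow_succ]; linarith
          · push_neg at hw2
            rw [hR w hw2 hwμ2, hL c hc0 hhalf]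
            have h1 : 0 ≤ 2*μ*c := by positivity
            have h2 : 2*μ*c ≤ 1 := by nlinarith
            have h5 := hmem (2*μ*c) ⟨h1, h2⟩
            have h6 : 0 ≤ 2*μ*(1-w) := by nlinarith
            have h7 : 2*μ*(1-w) ≤ 1 := by nlinarith
            have h8 := hmem (2*μ*(1-w)) ⟨h6, h7⟩
            have hpos : (0:ℝ) < (1/2:ℝ)^(k+1) := by positivity
            linarith [h5.2, h8.2]
        · push_neg at hhalf
          have hw2 : 1/2 < w := lt_of_lt_of_le hhalf hcw
          rw [hR w hw2 hwμ2, hR c hhalf hcμ2]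
          have h6 : 0 ≤ 2*μ*(1-c) := by nlinarith
          have h4 : 2*μ*(1-c) ≤ μ := by nlinarith
          have h1 : 0 ≤ 2*μ*(1-w) := by nlinarith
          have h2 : 2*μ*(1-w) ≤ 2*μ*(1-c) := by nlinarith
          have := (ih (2*μ*(1-c)) h6 h4).1 (2*μ*(1-w)) h1 h2
          rw [pow_succ]; linarith

lemma claimA {μ : ℝ} {h : ℝ → ℝ} (hμ1 : 1/2 < μ) (hμ2 : μ ≤ 1) (hc : IsCommuter μ h) :
    ∀ y : ℝ, 0 ≤ y → y ≤ μ → h y ≤ h μ := by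
  intro y hy0 hyμ
  by_contra hcon
  push_neg at hcon
  obtain ⟨k, hk⟩ := exists_pow_lt_of_lt_one (show (0:ℝ) < h y - h μ by linarith)
    (by norm_num : (1/2:ℝ) < 1)
  have := (key_lemma hμ1 hμ2 hc k μ (by linarith) le_rfl).1 y hy0 hyμ
  linarith

lemma hmu_half {μ : ℝ} {h : ℝ → ℝ} (hμ1 : 1/2 < μ) (hμ2 : μ ≤ 1) (hc : IsCommuter μ h) :
    1/2 ≤ h μ := by
  obtain ⟨hmem, hL, hR⟩ := hc
  rw [hR μ hμ1 hμ2]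
  have h1 : 0 ≤ 2*μ*(1-μ) := by nlinarith
  have h2 : 2*μ*(1-μ) ≤ 1 := by nlinarith
  linarith [(hmem _ ⟨h1, h2⟩).2]

lemma gap {μ : ℝ} {h : ℝ → ℝ} (hμ1 : 1/2 < μ) (hμ2 : μ ≤ 1) (hc : IsCommuter μ h) :
    ∀ n : ℕ, ∀ i : ℕ, 1 ≤ i → i ≤ 2^n → ∀ x : ℝ, 0 ≤ x → x ≤ 1 →
      h x ∉ Ioo ((2*(i:ℝ)-1)/2^(n+1) - (1 - h μ)/2^(n+1))
                ((2*(i:ℝ)-1)/2^(n+1) + (1 - h μ)/2^(n+1)) := by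
  have hμ0 : 0 < μ := by linarith
  have hA := claimA hμ1 hμ2 hc
  have hm := hmu_half hμ1 hμ2 hc
  obtain ⟨hmem, hL, hR⟩ := hc
  intro n
  induction n with
  | zero =>
      intro i hi1 hi2 x hx0 hx1 hIoo
      interval_cases i
      obtain ⟨lb, ub⟩ := hIoo
      norm_num at lb ub
      by_cases hx : x ≤ 1/2
      · have e := hL x hx0 hx
        have h1 : 0 ≤ 2*μ*x := by positivity
        have h2 : 2*μ*x ≤ μ := by nlinarith
        have := hA _ h1 h2
        linarith
      · push_neg at hx
        have e := hR x hx hx1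
        have h1 : 0 ≤ 2*μ*(1-x) := by nlinarith
        have h2 : 2*μ*(1-x) ≤ μ := by nlinarith
        have := hA _ h1 h2
        linarith
  | succ n ih =>
      intro i hi1 hi2 x hx0 hx1 hIoo
      obtain ⟨lb, ub⟩ := hIoo
      have hP : (0:ℝ) < 2^(n+1) := by positivity
      have epow : (2:ℝ)^(n+1+1) = 2^(n+1) * 2 := by ring
      rw [epow, ← div_div, ← div_div] at lb ub
      have hpow : (2:ℕ)^(n+1) = 2*2^n := by ring
      have e2 : (2:ℝ)^(n+1) = 2*2^n := by ring
      by_cases hx : x ≤ 1/2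
      · have e := hL x hx0 hx
        have h1 : 0 ≤ 2*μ*x := by positivity
        have h2 : 2*μ*x ≤ 1 := by nlinarith
        by_cases hi : i ≤ 2^n
        · exact ih i hi1 hi (2*μ*x) h1 h2 ⟨by linarith, by linarith⟩
        · push_neg at hi
          have h' : ((2^n + 1 : ℕ) : ℝ) ≤ (i:ℝ) := Nat.cast_le.mpr hi
          push_cast at h'
          have hy1 : h (2*μ*x) ≤ 1 := (hmem _ ⟨h1, h2⟩).2
          have key1 : (2*(i:ℝ)-1)/2^(n+1) - (1-h μ)/2^(n+1) < 1 := by linarith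
          rw [div_sub_div_same, div_lt_one hP] at key1
          linarith
      · push_neg at hx
        have e := hR x hx hx1
        have h1 : 0 ≤ 2*μ*(1-x) := by nlinarith
        have h2 : 2*μ*(1-x) ≤ 1 := by nlinarith
        have hy0 : 0 ≤ h (2*μ*(1-x)) := (hmem _ ⟨h1, h2⟩).1
        have hy1 : h (2*μ*(1-x)) ≤ 1 := (hmem _ ⟨h1, h2⟩).2
        by_cases hi : 2^n < i
        · set j : ℕ := 2^(n+1) + 1 - i with hj
          have hj1 : 1 ≤ j := by omega
          have hj2 : j ≤ 2^n := by omega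
          have hjc : (j:ℝ) = 2^(n+1) + 1 - (i:ℝ) := by
            rw [hj]
            push_cast [Nat.cast_sub (by omega : i ≤ 2^(n+1)+1)]
            ring
          have hrel : (2*(j:ℝ)-1)/2^(n+1) = 2 - (2*(i:ℝ)-1)/2^(n+1) := by
            rw [hjc]; field_simp; ring
          exact ih j hj1 hj2 (2*μ*(1-x)) h1 h2 ⟨by linarith, by linarith⟩
        · push_neg at hi
          have hic : (i:ℝ) ≤ (2:ℝ)^n := by exact_mod_cast hi
          have key1 : (1:ℝ) < (2*(i:ℝ)-1)/2^(n+1) + (1-h μ)/2^(n+1) := by linarith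
          rw [← add_div, one_lt_div hP] at key1
          linarith


/-- For `1/2 < μ ≤ 1`, no point of the union over `n ≥ 1` and `1 ≤ i ≤ 2^(n-1)` of the
open intervals centered at `(2i-1)/2^n` of radius `(1 - h_μ(μ))/2^n` lies in the range
of the commuter `h_μ`. -/
theorem commuter_range_omits (μ : ℝ) (hμ1 : 1/2 < μ) (hμ2 : μ ≤ 1)
    (h : ℝ → ℝ) (hc : IsCommuter μ h) :
    ∀ n : ℕ, 1 ≤ n → ∀ i : ℕ, 1 ≤ i → i ≤ 2^(n-1) → ∀ x ∈ Icc (0:ℝ) 1,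
      h x ∉ Ioo ((2*(i:ℝ)-1)/2^n - (1 - h μ)/2^n)
                ((2*(i:ℝ)-1)/2^n + (1 - h μ)/2^n) := by
  intro n hn i hi1 hi2 x hx
  obtain ⟨m, rfl⟩ := Nat.exists_eq_add_of_le hn
  rw [show 1 + m - 1 = m from by omega] at hi2
  rw [show 1 + m = m + 1 from by omega]
  exact gap hμ1 hμ2 hc m i hi1 hi2 x hx.1 hx.2
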